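/- Let X and Y be the ℕ×ℕ upper-triangular matrices with entries X_{n,n+2k} = ((n+1)/(n+k+1))·C(n+2k, k) and Y_{n,n+2k} = (−1)^k·C(n+k, k) for n, k ≥ 0, and all other entries zero. Then X and Y are mutually inverse: for all n, m, Σ_j X_{n,j}·Y_{j,m} = δ_{n,m} and Σ_j Y_{n,j}·X_{j,m} = δ_{n,m} (the sums are finite since X and Y are supported on j ≥ n of the same parity as n, and ≤ m). -/

import Mathlib

open Finset


/-- The matrix `X` with `X_{n,n+2k} = ((n+1)/(n+k+1))·C(n+2k,k)` (a ballot number,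
always an integer) and all other entries zero. -/
def Xmat (n m : ℕ) : ℤ :=
  if n ≤ m ∧ (m - n) % 2 = 0 then
    (((n + 1) * Nat.choose m ((m - n) / 2) / (n + (m - n) / 2 + 1) : ℕ) : ℤ)
  else 0

/-- The matrix `Y` with `Y_{n,n+2k} = (-1)^k·C(n+k,k)` and all other entries zero. -/
def Ymat (n m : ℕ) : ℤ :=
  if n ≤ m ∧ (m - n) % 2 = 0 then
    (-1) ^ ((m - n) / 2) * ((Nat.choose (n + (m - n) / 2) ((m - n) / 2) : ℕ) : ℤ)
  else 0

lemma ballot_nat (q k : ℕ) :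
    (q+1) * Nat.choose (q+2*(k+1)) (k+1) / (q+(k+1)+1)
      = Nat.choose (q+2*(k+1)) (k+1) - Nat.choose (q+2*(k+1)) k := by
  set N := q + 2*(k+1) with hN
  have key : Nat.choose N (k+1) * (k+1) = Nat.choose N k * (q+k+2) := by
    have := Nat.choose_succ_right_eq N k
    rw [this]; congr 1; omega
  have hle : Nat.choose N k ≤ Nat.choose N (k+1) :=
    Nat.choose_le_succ_of_lt_half_left (by omega)
  have hmul : (q+k+2) * (Nat.choose N (k+1) - Nat.choose N k) = (q+1) * Nat.choose N (k+1) := by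
    rw [Nat.mul_sub]
    have h2 : (q+k+2) * Nat.choose N k = (k+1) * Nat.choose N (k+1) := by
      rw [mul_comm (k+1)]; rw [key]; ring
    rw [h2, ← Nat.sub_mul]
    congr 1
    omega
  have hq : q + (k+1) + 1 = q + k + 2 := by omega
  rw [hq, ← hmul, Nat.mul_div_cancel_left _ (by omega : 0 < q+k+2)]

lemma Xmat_apply (n i : ℕ) :
    Xmat n (n + 2*i) = (((n+1) * Nat.choose (n+2*i) i / (n+i+1) : ℕ) : ℤ) := by
  rw [Xmat, if_pos ⟨by omega, by omega⟩]
  have h1 : n + 2*i - n = 2*i := by omega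
  rw [h1, Nat.mul_div_cancel_left i (by norm_num)]

lemma Ymat_apply (n i : ℕ) :
    Ymat n (n + 2*i) = (-1)^i * (Nat.choose (n+i) i : ℤ) := by
  rw [Ymat, if_pos ⟨by omega, by omega⟩]
  have h1 : n + 2*i - n = 2*i := by omega
  rw [h1, Nat.mul_div_cancel_left i (by norm_num)]

lemma Xmat_apply_int (n i : ℕ) :
    Xmat n (n + 2*i) = (Nat.choose (n+2*i) i : ℤ)
      - (if i = 0 then 0 else (Nat.choose (n+2*i) (i-1) : ℤ)) := by
  rw [Xmat_apply]
  cases i with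
  | zero => simp
  | succ k =>
    rw [ballot_nat n k]
    have hle : Nat.choose (n+2*(k+1)) k ≤ Nat.choose (n+2*(k+1)) (k+1) :=
      Nat.choose_le_succ_of_lt_half_left (by omega)
    rw [Nat.cast_sub hle]
    simp

lemma Blem (M : ℕ) (hM : 1 ≤ M) : ∀ K : ℕ,
    ∑ k ∈ range (K+1), (-1:ℤ)^k * (Nat.choose M (K-k) : ℤ) = (Nat.choose (M-1) K : ℤ) := by
  intro K
  induction K with
  | zero => simp
  | succ K ih =>
    rw [Finset.sum_range_succ' (fun k => (-1:ℤ)^k * (Nat.choose M (K+1-k) : ℤ)) (K+1)]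
    have h1 : ∑ k ∈ range (K+1), (-1:ℤ)^(k+1) * (Nat.choose M (K+1-(k+1)) : ℤ)
        = -∑ k ∈ range (K+1), (-1:ℤ)^k * (Nat.choose M (K-k) : ℤ) := by
      rw [← Finset.sum_neg_distrib]
      apply Finset.sum_congr rfl
      intro k hk
      have : K + 1 - (k+1) = K - k := by omega
      rw [this]; ring
    rw [h1, ih]
    obtain ⟨M', rfl⟩ : ∃ M', M = M' + 1 := ⟨M - 1, by omega⟩
    simp only [Nat.add_sub_cancel, pow_zero, one_mul, Nat.sub_zero]
    rw [Nat.choose_succ_succ' M' K]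
    push_cast
    ring

lemma Tlem : ∀ n M K : ℕ, n < M →
    ∑ k ∈ range (K+1), (-1:ℤ)^k * (Nat.choose (n+k) k : ℤ) * (Nat.choose M (K-k) : ℤ)
      = (Nat.choose (M-n-1) K : ℤ) := by
  intro n
  induction n with
  | zero =>
    intro M K h
    have := Blem M h K
    simpa [mul_comm, mul_assoc, mul_left_comm] using this
  | succ n ih =>
    intro M K h
    induction K with
    | zero => simp
    | succ K ihK =>
      rw [Finset.sum_range_succ' (fun k => (-1:ℤ)^k * (Nat.choose (n+1+k) k : ℤ) * (Nat.choose M (K+1-k) : ℤ)) (K+1)]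
      have split : ∀ k ∈ range (K+1),
          (-1:ℤ)^(k+1) * (Nat.choose (n+1+(k+1)) (k+1) : ℤ) * (Nat.choose M (K+1-(k+1)) : ℤ)
          = (-1:ℤ)^(k+1) * (Nat.choose (n+(k+1)) (k+1) : ℤ) * (Nat.choose M ((K+1)-(k+1)) : ℤ)
            + (-((-1:ℤ)^k * (Nat.choose (n+1+k) k : ℤ) * (Nat.choose M (K-k) : ℤ))) := by
        intro k hk
        have hc : Nat.choose (n+1+(k+1)) (k+1) = Nat.choose (n+(k+1)) k + Nat.choose (n+(k+1)) (k+1) := by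
          have := Nat.choose_succ_succ' (n+(k+1)) k
          convert this using 2; omega
        rw [hc]
        have h2 : (K+1) - (k+1) = K - k := by omega
        have h3 : n + (k+1) = n + 1 + k := by omega
        rw [h2, h3]
        push_cast
        ring
      rw [Finset.sum_congr rfl split, Finset.sum_add_distrib]
      have hT : ∑ k ∈ range (K+1), (-1:ℤ)^(k+1) * (Nat.choose (n+(k+1)) (k+1) : ℤ) * (Nat.choose M ((K+1)-(k+1)) : ℤ)
          = (Nat.choose (M-n-1) (K+1) : ℤ) - (Nat.choose M (K+1) : ℤ) := by
        have := ih M (K+1) (by omega)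
        rw [Finset.sum_range_succ' (fun k => (-1:ℤ)^k * (Nat.choose (n+k) k : ℤ) * (Nat.choose M (K+1-k) : ℤ)) (K+1)] at this
        simp only [pow_zero, Nat.choose_zero_right, Nat.cast_one, one_mul, Nat.sub_zero, Nat.add_zero] at this
        linarith [this]
      have hsum2 : ∑ k ∈ range (K+1), (-((-1:ℤ)^k * (Nat.choose (n+1+k) k : ℤ) * (Nat.choose M (K-k) : ℤ)))
          = -(Nat.choose (M-(n+1)-1) K : ℤ) := by
        rw [Finset.sum_neg_distrib, ihK]
      rw [hT, hsum2]
      simp only [pow_zero, Nat.choose_zero_right, Nat.cast_one, one_mul, Nat.sub_zero, Nat.add_zero]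
      have hp : Nat.choose (M-n-1) (K+1) = Nat.choose (M-n-2) K + Nat.choose (M-n-2) (K+1) := by
        have := Nat.choose_succ_succ' (M-n-2) K
        convert this using 2; omega
      have he : M - (n+1) - 1 = M - n - 2 := by omega
      rw [he, hp]
      push_cast
      ring

lemma YX (n j : ℕ) : ∑ k ∈ range (j+1), Ymat n k * Xmat k j = if n = j then 1 else 0 := by
  by_cases hnj : n ≤ j
  · by_cases hpar : (j - n) % 2 = 0
    · obtain ⟨K, rfl⟩ : ∃ K, j = n + 2*K := ⟨(j-n)/2, by omega⟩
      have hsub : (range (K+1)).image (fun i => n + 2*i) ⊆ range (n+2*K+1) := by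
        intro x hx
        simp only [mem_image, mem_range] at hx ⊢
        obtain ⟨i, hi, rfl⟩ := hx
        omega
      have hzero : ∀ x ∈ range (n+2*K+1), x ∉ (range (K+1)).image (fun i => n + 2*i) →
          Ymat n x * Xmat x (n+2*K) = 0 := by
        intro x hx hnx
        simp only [mem_image, mem_range, not_exists] at hx hnx
        rw [Ymat, if_neg, zero_mul]
        rintro ⟨h1, h2⟩
        exact (hnx ((x-n)/2)) ⟨by omega, by omega⟩
      rw [← Finset.sum_subset hsub hzero,
          Finset.sum_image (by intro a _ b _ h; simp only at h; omega)]
      have hterm : ∀ i ∈ range (K+1), Ymat n (n+2*i) * Xmat (n+2*i) (n+2*K)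
          = (-1:ℤ)^i * (Nat.choose (n+i) i : ℤ) *
            ((Nat.choose (n+2*K) (K-i) : ℤ)
              - (if K - i = 0 then 0 else (Nat.choose (n+2*K) (K-i-1) : ℤ))) := by
        intro i hi
        simp only [mem_range] at hi
        have h4 : n + 2*K = (n+2*i) + 2*(K-i) := by omega
        rw [Ymat_apply, h4, Xmat_apply_int]
      rw [Finset.sum_congr rfl hterm]
      cases K with
      | zero => simp
      | succ K' =>
        set K := K' + 1 with hKdef
        rw [if_neg (by omega)]
        simp only [mul_sub]
        rw [Finset.sum_sub_distrib]
        have hfst : ∑ i ∈ range (K+1), (-1:ℤ)^i * (Nat.choose (n+i) i : ℤ) * (Nat.choose (n+2*K) (K-i) : ℤ)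
            = (Nat.choose (2*K-1) K : ℤ) := by
          rw [Tlem n (n+2*K) K (by omega)]
          have h6 : n + 2*K - n - 1 = 2*K - 1 := by omega
          rw [h6]
        have hsnd : ∑ i ∈ range (K+1), (-1:ℤ)^i * (Nat.choose (n+i) i : ℤ) *
              (if K - i = 0 then 0 else (Nat.choose (n+2*K) (K-i-1) : ℤ))
            = (Nat.choose (2*K-1) K' : ℤ) := by
          rw [Finset.sum_range_succ]
          have hlast : (if K - K = 0 then (0:ℤ) else (Nat.choose (n+2*K) (K-K-1) : ℤ)) = 0 := by
            simp
          rw [hlast, mul_zero, add_zero]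
          have hcong : ∀ i ∈ range K, (-1:ℤ)^i * (Nat.choose (n+i) i : ℤ) *
                (if K - i = 0 then 0 else (Nat.choose (n+2*K) (K-i-1) : ℤ))
              = (-1:ℤ)^i * (Nat.choose (n+i) i : ℤ) * (Nat.choose (n+2*K) (K'-i) : ℤ) := by
            intro i hi
            simp only [mem_range] at hi
            rw [if_neg (by omega)]
            have h5 : K - i - 1 = K' - i := by omega
            rw [h5]
          rw [Finset.sum_congr rfl hcong, Tlem n (n+2*K) K' (by omega)]
          have h6 : n + 2*K - n - 1 = 2*K - 1 := by omega
          rw [h6]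
        rw [hfst, hsnd]
        have hsym : Nat.choose (2*K-1) K' = Nat.choose (2*K-1) K := by
          have h1 : 2*K-1-K = K' := by omega
          rw [← Nat.choose_symm (by omega : K ≤ 2*K-1), h1]
        rw [hsym, sub_self]
    · rw [if_neg (by omega)]
      apply Finset.sum_eq_zero
      intro k hk
      simp only [mem_range] at hk
      by_cases h1 : n ≤ k ∧ (k - n) % 2 = 0
      · rw [Xmat, if_neg (by omega), mul_zero]
      · rw [Ymat, if_neg h1, zero_mul]
  · rw [if_neg (by omega)]
    apply Finset.sum_eq_zero
    intro k hk
    simp only [mem_range] at hk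
    rw [Ymat, if_neg (by omega), zero_mul]

/-- `X` and `Y` are mutually inverse: `Σ_j X_{n,j} Y_{j,m} = δ_{n,m}` and
`Σ_j Y_{n,j} X_{j,m} = δ_{n,m}` (the sums are supported on `n ≤ j ≤ m`). -/
theorem Xmat_Ymat_inverse (n m : ℕ) :
    (∑ j ∈ Finset.range (m + 1), Xmat n j * Ymat j m = if n = m then 1 else 0) ∧
    (∑ j ∈ Finset.range (m + 1), Ymat n j * Xmat j m = if n = m then 1 else 0) := by
  refine ⟨?_, YX n m⟩
  by_cases hnm : n ≤ m
  · -- matrix argument on Fin (m+1)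
    set A : Matrix (Fin (m+1)) (Fin (m+1)) ℤ := fun i j => Ymat i j with hA
    set B : Matrix (Fin (m+1)) (Fin (m+1)) ℤ := fun i j => Xmat i j with hB
    have hAB : A * B = 1 := by
      ext i j
      rw [Matrix.mul_apply]
      have h1 : ∑ k : Fin (m+1), A i k * B k j
          = ∑ k ∈ Finset.range (m+1), Ymat i k * Xmat k j :=
        Fin.sum_univ_eq_sum_range (fun k => Ymat i k * Xmat k j) (m+1)
      have h2 : ∑ k ∈ Finset.range (m+1), Ymat i k * Xmat k j
          = ∑ k ∈ Finset.range ((j:ℕ)+1), Ymat i k * Xmat k j := by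
        symm
        apply Finset.sum_subset
        · intro x hx
          simp only [mem_range] at hx ⊢
          omega
        · intro x hx hx2
          simp only [mem_range] at hx hx2
          rw [Xmat, if_neg (by omega), mul_zero]
      rw [h1, h2, YX i j]
      simp [Matrix.one_apply, Fin.ext_iff]
    have hBA : B * A = 1 := mul_eq_one_comm.mp hAB
    have := congrFun (congrFun hBA ⟨n, by omega⟩) ⟨m, by omega⟩
    rw [Matrix.mul_apply] at this
    have h1 : ∑ k : Fin (m+1), B ⟨n, by omega⟩ k * A k ⟨m, by omega⟩
        = ∑ k ∈ Finset.range (m+1), Xmat n k * Ymat k m :=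
      Fin.sum_univ_eq_sum_range (fun k => Xmat n k * Ymat k m) (m+1)
    rw [h1] at this
    rw [this]
    simp [Matrix.one_apply, Fin.ext_iff]
  · rw [if_neg (by omega)]
    apply Finset.sum_eq_zero
    intro k hk
    simp only [mem_range] at hk
    rw [Xmat, if_neg (by omega), zero_mul]
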